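/- arXiv:1404.1778 — 6 statements merged into one kernel-verified Lean document; each statement's English description precedes it below -/
import Mathlib

section
/- Let f : ℝ → ℂ be a continuously differentiable function with compact support. Then the limit as ε → 0⁺ of ∫_ℝ f(x)/(x + iε) dx exists and equals ∫_{(0,∞)} (f(x) − f(−x))/x dx − iπ f(0), where the latter integral converges absolutely (the integrand (f(x) − f(−x))/x extends continuously to x = 0). -/
open MeasureTheory Filter Set

/-- Sokhotski–Plemelj: for C¹ compactly supported `f`,
`lim_{ε→0⁺} ∫ f(x)/(x+iε) dx = ∫_{(0,∞)} (f(x)-f(-x))/x dx - iπ f(0)`,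
and the latter integral converges absolutely. -/
theorem stmt0 (f : ℝ → ℂ) (hf : ContDiff ℝ 1 f) (hsupp : HasCompactSupport f) :
    IntegrableOn (fun x : ℝ => (f x - f (-x)) / (x : ℂ)) (Ioi 0) ∧
    Tendsto (fun ε : ℝ => ∫ x : ℝ, f x / ((x : ℂ) + (ε : ℂ) * Complex.I))
      (nhdsWithin 0 (Ioi 0))
      (nhds ((∫ x in Ioi (0 : ℝ), (f x - f (-x)) / (x : ℂ))
        - (Real.pi : ℂ) * Complex.I * f 0)) := by
  obtain ⟨K, hK⟩ := ContDiff.lipschitzWith_of_hasCompactSupport hsupp hf one_ne_zero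
  obtain ⟨M, hM⟩ := hf.continuous.bounded_above_of_compact_support hsupp
  obtain ⟨R, hR⟩ : ∃ R : ℝ, tsupport f ⊆ Icc (-R) R := by
    obtain ⟨R, hR⟩ := hsupp.isBounded.subset_closedBall 0
    exact ⟨R, by simpa [Real.closedBall_eq_Icc, zero_sub, zero_add] using hR⟩
  have hfz : ∀ x : ℝ, R < |x| → f x = 0 := by
    intro x hx
    apply image_eq_zero_of_notMem_tsupport
    intro hmem
    have h := hR hmem
    rw [mem_Icc] at h
    have := abs_le.mpr h
    linarith
  -- Part 1: integrability of (f x - f (-x)) / x on Ioi 0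
  have hmeasG : AEStronglyMeasurable (fun x : ℝ => (f x - f (-x)) / (x : ℂ)) volume :=
    (((hf.continuous.sub (hf.continuous.comp continuous_neg)).measurable).div
      Complex.measurable_ofReal).aestronglyMeasurable
  have hbound : ∀ x : ℝ, 0 < x → ‖(f x - f (-x)) / (x : ℂ)‖ ≤ 2 * K := by
    intro x hx
    have h1 : ‖f x - f (-x)‖ ≤ K * (2 * x) := by
      have := hK.dist_le_mul x (-x)
      rw [dist_eq_norm] at this
      have hd : dist x (-x) = 2 * x := by
        rw [Real.dist_eq, abs_of_pos (by linarith : (0:ℝ) < x - -x)]; ring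
      rw [hd] at this
      exact this
    rw [norm_div, Complex.norm_real, Real.norm_eq_abs, abs_of_pos hx]
    rw [div_le_iff₀ hx]
    calc ‖f x - f (-x)‖ ≤ K * (2 * x) := h1
      _ = 2 * K * x := by ring
  have part1 : IntegrableOn (fun x : ℝ => (f x - f (-x)) / (x : ℂ)) (Ioi 0) := by
    have h1 : IntegrableOn (fun x : ℝ => (f x - f (-x)) / (x : ℂ)) (Ioc 0 R) := by
      apply Measure.integrableOn_of_bounded (M := 2 * K) measure_Ioc_lt_top.ne
        hmeasG
      filter_upwards [ae_restrict_mem measurableSet_Ioc] with x hx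
      exact hbound x hx.1
    have h2 : IntegrableOn (fun x : ℝ => (f x - f (-x)) / (x : ℂ)) (Ioi R) := by
      have hz : EqOn (fun x : ℝ => (f x - f (-x)) / (x : ℂ)) 0 (Ioi R) := by
        intro x hx
        have hxR : R < x := hx
        have hz1 : f x = 0 := hfz x (lt_of_lt_of_le hxR (le_abs_self x))
        have hz2 : f (-x) = 0 := hfz (-x) (by rw [abs_neg]; exact lt_of_lt_of_le hxR (le_abs_self x))
        simp [hz1, hz2]
      rw [integrableOn_congr_fun hz measurableSet_Ioi]
      exact integrableOn_zero
    exact (h1.union h2).mono_set (fun x hx =>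
      (le_or_gt x R).imp (fun h => ⟨hx, h⟩) id)
  refine ⟨part1, ?_⟩
  -- compact support helper
  have hcomb : ∀ g : ℝ → ℂ, (∀ x, f x = 0 → f (-x) = 0 → g x = 0) → HasCompactSupport g := by
    intro g hg
    apply HasCompactSupport.intro (isCompact_Icc (a := -|R|) (b := |R|))
    intro x hx
    have hxabs : |R| < |x| := by
      rw [mem_Icc, not_and_or, not_le, not_le] at hx
      rcases hx with h | h
      · calc |R| < -x := by linarith [neg_abs_le R]
          _ ≤ |x| := by rw [← abs_neg]; exact le_abs_self _
      · exact lt_of_lt_of_le h (le_abs_self x)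
    have hRx : R < |x| := lt_of_le_of_lt (le_abs_self R) hxabs
    exact hg x (hfz x hRx) (hfz (-x) (by rwa [abs_neg]))
  -- nonvanishing denominators
  have hden : ∀ ε : ℝ, 0 < ε → ∀ x : ℝ, ((x : ℂ) + (ε : ℂ) * Complex.I) ≠ 0 := by
    intro ε hε x h
    have him := congrArg Complex.im h
    simp at him
    exact hε.ne' him
  -- key identity for each ε > 0
  have key : ∀ ε : ℝ, 0 < ε →
      (∫ x : ℝ, f x / ((x : ℂ) + (ε : ℂ) * Complex.I))
        = (∫ x in Ioi (0:ℝ), (f x - f (-x)) * ((x / (x ^ 2 + ε ^ 2) : ℝ) : ℂ))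
          - Complex.I * ∫ x in Ioi (0:ℝ), (f x + f (-x)) * ((ε / (x ^ 2 + ε ^ 2) : ℝ) : ℂ) := by
    intro ε hε
    have hd := hden ε hε
    set F : ℝ → ℂ := fun x => f x / ((x : ℂ) + (ε : ℂ) * Complex.I) with hF
    have hcont : Continuous F := by
      apply hf.continuous.div
      · exact (Complex.continuous_ofReal).add continuous_const
      · exact hd
    have hFCS : HasCompactSupport F := by
      apply hcomb
      intro x h1 _
      simp [hF, h1]
    have hint : Integrable F := hcont.integrable_of_hasCompactSupport hFCS
    have hintn : Integrable (fun x => F (-x)) := hint.comp_neg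
    have hrefl : (∫ x in Ioi (0:ℝ), F (-x)) = ∫ x in Iic (0:ℝ), F x := by
      simpa using integral_comp_neg_Ioi (0:ℝ) F
    have hsplit : (∫ x : ℝ, F x)
        = (∫ x in Ioi (0:ℝ), F (-x)) + ∫ x in Ioi (0:ℝ), F x := by
      rw [hrefl]
      exact (intervalIntegral.integral_Iic_add_Ioi hint.integrableOn hint.integrableOn).symm
    have haddint : (∫ x in Ioi (0:ℝ), F (-x)) + (∫ x in Ioi (0:ℝ), F x)
        = ∫ x in Ioi (0:ℝ), (F (-x) + F x) :=
      (integral_add hintn.integrableOn hint.integrableOn).symm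
    have hptwise : ∀ x : ℝ, F (-x) + F x
        = (f x - f (-x)) * ((x / (x ^ 2 + ε ^ 2) : ℝ) : ℂ)
          - Complex.I * ((f x + f (-x)) * ((ε / (x ^ 2 + ε ^ 2) : ℝ) : ℂ)) := by
      intro x
      have hd1 : ((x : ℂ) + (ε : ℂ) * Complex.I) ≠ 0 := hd x
      have hd2 : (((-x : ℝ) : ℂ) + (ε : ℂ) * Complex.I) ≠ 0 := hd (-x)
      have hq : ((x ^ 2 + ε ^ 2 : ℝ) : ℂ) ≠ 0 := by
        exact_mod_cast (ne_of_gt (by positivity : (0:ℝ) < x ^ 2 + ε ^ 2))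
      have hI3 : Complex.I ^ 3 = -Complex.I := by
        rw [pow_succ, Complex.I_sq]; ring
      simp only [hF]
      push_cast at hd2 hq ⊢
      field_simp
      ring_nf
      rw [hI3, Complex.I_sq]
      ring
    have hintA : Integrable (fun x : ℝ => (f x - f (-x)) * ((x / (x ^ 2 + ε ^ 2) : ℝ) : ℂ)) := by
      apply Continuous.integrable_of_hasCompactSupport
      · apply Continuous.mul
        · exact hf.continuous.sub (hf.continuous.comp continuous_neg)
        · apply Complex.continuous_ofReal.comp
          apply Continuous.div continuous_id ((continuous_pow 2).add continuous_const)
          intro x; simp only [Pi.add_apply]; positivity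
      · apply hcomb; intro x h1 h2; simp [h1, h2]
    have hintB : Integrable (fun x : ℝ => (f x + f (-x)) * ((ε / (x ^ 2 + ε ^ 2) : ℝ) : ℂ)) := by
      apply Continuous.integrable_of_hasCompactSupport
      · apply Continuous.mul
        · exact hf.continuous.add (hf.continuous.comp continuous_neg)
        · apply Complex.continuous_ofReal.comp
          apply Continuous.div continuous_const ((continuous_pow 2).add continuous_const)
          intro x; simp only [Pi.add_apply]; positivity
      · apply hcomb; intro x h1 h2; simp [h1, h2]
    calc (∫ x : ℝ, F x) = ∫ x in Ioi (0:ℝ), (F (-x) + F x) := by rw [hsplit, haddint]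
      _ = ∫ x in Ioi (0:ℝ), ((f x - f (-x)) * ((x / (x ^ 2 + ε ^ 2) : ℝ) : ℂ)
            - Complex.I * ((f x + f (-x)) * ((ε / (x ^ 2 + ε ^ 2) : ℝ) : ℂ))) := by
          exact setIntegral_congr_fun measurableSet_Ioi fun x _ => hptwise x
      _ = (∫ x in Ioi (0:ℝ), (f x - f (-x)) * ((x / (x ^ 2 + ε ^ 2) : ℝ) : ℂ))
            - Complex.I * ∫ x in Ioi (0:ℝ), (f x + f (-x)) * ((ε / (x ^ 2 + ε ^ 2) : ℝ) : ℂ) := by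
          rw [integral_sub hintA.integrableOn ((hintB.integrableOn).const_mul Complex.I),
            integral_const_mul]
  -- convergence of the principal-value part
  have hA : Tendsto (fun ε : ℝ => ∫ x in Ioi (0:ℝ), (f x - f (-x)) * ((x / (x ^ 2 + ε ^ 2) : ℝ) : ℂ))
      (nhdsWithin 0 (Ioi 0)) (nhds (∫ x in Ioi (0:ℝ), (f x - f (-x)) / (x : ℂ))) := by
    apply tendsto_integral_filter_of_dominated_convergence
      (bound := fun x => ‖(f x - f (-x)) / (x : ℂ)‖)
    · apply Eventually.of_forall
      intro ε
      apply AEStronglyMeasurable.restrict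
      apply Measurable.aestronglyMeasurable
      apply Measurable.mul
      · exact (hf.continuous.sub (hf.continuous.comp continuous_neg)).measurable
      · exact Complex.measurable_ofReal.comp
          (measurable_id.div ((measurable_id.pow_const 2).add_const _))
    · apply Eventually.of_forall
      intro ε
      filter_upwards [ae_restrict_mem measurableSet_Ioi] with x hx
      have hx0 : (0:ℝ) < x := hx
      have h1 : |x / (x ^ 2 + ε ^ 2)| ≤ 1 / x := by
        rw [abs_of_nonneg (by positivity)]
        rw [div_le_div_iff₀ (by positivity) hx0]
        nlinarith [sq_nonneg ε]
      calc ‖(f x - f (-x)) * ((x / (x ^ 2 + ε ^ 2) : ℝ) : ℂ)‖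
          = ‖f x - f (-x)‖ * |x / (x ^ 2 + ε ^ 2)| := by
            rw [norm_mul, Complex.norm_real, Real.norm_eq_abs]
        _ ≤ ‖f x - f (-x)‖ * (1 / x) := mul_le_mul_of_nonneg_left h1 (norm_nonneg _)
        _ = ‖(f x - f (-x)) / (x : ℂ)‖ := by
            rw [norm_div, Complex.norm_real, Real.norm_eq_abs, abs_of_pos hx0]; ring
    · exact part1.norm
    · filter_upwards [ae_restrict_mem measurableSet_Ioi] with x hx
      have hx0 : (0:ℝ) < x := hx
      have hc : ContinuousAt (fun ε : ℝ => (f x - f (-x)) * ((x / (x ^ 2 + ε ^ 2) : ℝ) : ℂ)) 0 := by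
        apply ContinuousAt.mul continuousAt_const
        apply Complex.continuous_ofReal.continuousAt.comp
        apply ContinuousAt.div continuousAt_const (by fun_prop)
        positivity
      have ht := hc.tendsto.mono_left (nhdsWithin_le_nhds (s := Ioi (0:ℝ)))
      have hx0' : (x : ℂ) ≠ 0 := by exact_mod_cast hx0.ne'
      have hval0 : (f x - f (-x)) * ((x / (x ^ 2 + 0 ^ 2) : ℝ) : ℂ) = (f x - f (-x)) / (x : ℂ) := by
        push_cast
        rw [pow_two]
        field_simp
        ring
      rw [← hval0]
      exact ht
  -- the Poisson kernel part: substitution x = ε u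
  have hBsub : ∀ ε : ℝ, 0 < ε →
      (∫ x in Ioi (0:ℝ), (f x + f (-x)) * ((ε / (x ^ 2 + ε ^ 2) : ℝ) : ℂ))
        = ∫ u in Ioi (0:ℝ), (f (ε * u) + f (-(ε * u))) * (((1 + u ^ 2)⁻¹ : ℝ) : ℂ) := by
    intro ε hε
    set G : ℝ → ℂ := fun x => (f x + f (-x)) * ((ε / (x ^ 2 + ε ^ 2) : ℝ) : ℂ) with hG
    have h := integral_comp_mul_left_Ioi G 0 hε
    rw [mul_zero] at h
    have h2 : (∫ x in Ioi (0:ℝ), G x) = ε • ∫ u in Ioi (0:ℝ), G (ε * u) := by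
      rw [h, smul_smul, mul_inv_cancel₀ hε.ne', one_smul]
    rw [h2, ← integral_smul]
    apply setIntegral_congr_fun measurableSet_Ioi
    intro u hu
    simp only [hG]
    rw [Complex.real_smul, ← mul_assoc, mul_comm ((ε:ℂ)) _, mul_assoc]
    congr 1
    rw [← Complex.ofReal_mul]
    congr 1
    have h1u : (1 : ℝ) + u ^ 2 ≠ 0 := by positivity
    have : (ε * u) ^ 2 + ε ^ 2 = ε ^ 2 * (1 + u ^ 2) := by ring
    rw [this]
    rw [eq_comm, inv_eq_iff_eq_inv, eq_comm, inv_eq_one_div]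
    field_simp
  -- convergence of the Poisson kernel part to π f 0
  have hB : Tendsto (fun ε : ℝ => ∫ x in Ioi (0:ℝ), (f x + f (-x)) * ((ε / (x ^ 2 + ε ^ 2) : ℝ) : ℂ))
      (nhdsWithin 0 (Ioi 0)) (nhds ((Real.pi : ℂ) * f 0)) := by
    have hval : (∫ u in Ioi (0:ℝ), (f 0 + f 0) * (((1 + u ^ 2)⁻¹ : ℝ) : ℂ))
        = (Real.pi : ℂ) * f 0 := by
      rw [integral_const_mul]
      have h3 : (∫ a in Ioi (0:ℝ), (((1 + a ^ 2)⁻¹ : ℝ) : ℂ)) = ((Real.pi / 2 : ℝ) : ℂ) := by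
        have h4 : (∫ a in Ioi (0:ℝ), (1 + a ^ 2)⁻¹) = Real.pi / 2 := by
          simpa using integral_Ioi_inv_one_add_sq (i := (0:ℝ))
        exact (integral_ofReal (𝕜 := ℂ) (f := fun a : ℝ => (1 + a ^ 2)⁻¹)).trans
          (congrArg Complex.ofReal h4)
      rw [h3]
      push_cast
      ring
    have h2 : Tendsto (fun ε : ℝ => ∫ u in Ioi (0:ℝ),
        (f (ε * u) + f (-(ε * u))) * (((1 + u ^ 2)⁻¹ : ℝ) : ℂ))
        (nhdsWithin 0 (Ioi 0)) (nhds ((Real.pi : ℂ) * f 0)) := by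
      rw [← hval]
      apply tendsto_integral_filter_of_dominated_convergence
        (bound := fun u => (2 * M) * (1 + u ^ 2)⁻¹)
      · apply Eventually.of_forall
        intro ε
        apply AEStronglyMeasurable.restrict
        apply Continuous.aestronglyMeasurable
        apply Continuous.mul
        · exact (hf.continuous.comp (continuous_const.mul continuous_id)).add
            (hf.continuous.comp (continuous_const.mul continuous_id).neg)
        · apply Complex.continuous_ofReal.comp
          apply Continuous.inv₀ (continuous_const.add (continuous_pow 2))
          intro u; simp only [Pi.add_apply]; positivity
      · apply Eventually.of_forall
        intro ε
        apply ae_of_all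
        intro u
        rw [norm_mul, Complex.norm_real, Real.norm_eq_abs,
          abs_of_nonneg (by positivity : (0:ℝ) ≤ (1 + u ^ 2)⁻¹)]
        have : ‖f (ε * u) + f (-(ε * u))‖ ≤ 2 * M := by
          calc ‖f (ε * u) + f (-(ε * u))‖ ≤ ‖f (ε * u)‖ + ‖f (-(ε * u))‖ := norm_add_le _ _
            _ ≤ M + M := add_le_add (hM _) (hM _)
            _ = 2 * M := by ring
        exact mul_le_mul_of_nonneg_right this (by positivity)
      · exact (integrable_inv_one_add_sq.integrableOn).const_mul _
      · apply ae_of_all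
        intro u
        have hc : ContinuousAt (fun ε : ℝ =>
            (f (ε * u) + f (-(ε * u))) * (((1 + u ^ 2)⁻¹ : ℝ) : ℂ)) 0 := by
          apply ContinuousAt.mul _ continuousAt_const
          apply ContinuousAt.add
          · exact (hf.continuous.continuousAt).comp (by fun_prop)
          · exact (hf.continuous.continuousAt).comp (by fun_prop)
        have ht := hc.tendsto.mono_left (nhdsWithin_le_nhds (s := Ioi (0:ℝ)))
        simpa using ht
    apply h2.congr'
    filter_upwards [self_mem_nhdsWithin] with ε hε
    exact (hBsub ε hε).symm
  -- combine
  have hfinal := hA.sub (tendsto_const_nhds (x := Complex.I) |>.mul hB)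
  have heq : (∫ x in Ioi (0:ℝ), (f x - f (-x)) / (x : ℂ)) - Complex.I * ((Real.pi : ℂ) * f 0)
      = (∫ x in Ioi (0:ℝ), (f x - f (-x)) / (x : ℂ)) - (Real.pi : ℂ) * Complex.I * f 0 := by
    ring
  rw [heq] at hfinal
  apply hfinal.congr'
  filter_upwards [self_mem_nhdsWithin] with ε hε
  exact (key ε hε).symm
end

section
/- Let f : ℝ → ℂ be a twice continuously differentiable function with compact support contained in an interval of length L, with f(0) = 1, and let M₁, M₂ ≥ 0 satisfy |f'(x)| ≤ M₁ and |f''(x)| ≤ M₂ for all x. Then for all k ≠ 0, ‖∫_0^∞ e^{ikx} f(x) dx − i/k‖ ≤ (M₁ + L·M₂)/k². In particular ∫_0^∞ e^{ikx} f(x) dx is not fast decreasing in either direction k → ±∞, so every (0, k) with k ≠ 0 lies in the wavefront set of the Heaviside distribution. -/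
open MeasureTheory Filter Set

lemma parts_aux (c : ℂ) (g : ℝ → ℂ) (hg : ContDiff ℝ 1 g) (hgs : HasCompactSupport g) :
    ∫ x in Ioi (0 : ℝ), Complex.exp (c * x) * deriv g x
      = -g 0 - c * ∫ x in Ioi (0 : ℝ), Complex.exp (c * x) * g x := by
  set e : ℝ → ℂ := fun x => Complex.exp (c * x) with he
  have hce : ContDiff ℝ 1 e := by
    exact Complex.contDiff_exp.comp (contDiff_const.mul Complex.ofRealCLM.contDiff)
  have hexp : ∀ x : ℝ, HasDerivAt e (c * e x) x := by
    intro x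
    have h0 : HasDerivAt (fun y : ℝ => c * (y : ℂ)) c x := by
      simpa using (Complex.ofRealCLM.hasDerivAt (x := x)).const_mul c
    simpa [he, mul_comm] using h0.cexp
  set F : ℝ → ℂ := fun x => e x * g x with hF
  have hFc : ContDiff ℝ 1 F := hce.mul hg
  have hFs : HasCompactSupport F := by
    apply hgs.mono
    intro x hx
    simp only [hF, Function.mem_support] at hx ⊢
    intro h0; exact hx (by simp [h0])
  have hFd : ∀ x : ℝ, HasDerivAt F (c * e x * g x + e x * deriv g x) x := by
    intro x
    have := (hexp x).mul ((hg.differentiable one_ne_zero x).hasDerivAt)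
    exact this
  have hderivF : deriv F = fun x => c * e x * g x + e x * deriv g x :=
    funext fun x => (hFd x).deriv
  have key := hFs.integral_Ioi_deriv_eq hFc 0
  rw [hderivF] at key
  have hI1 : Integrable (fun x : ℝ => e x * g x) := by
    refine (hce.continuous.mul hg.continuous).integrable_of_hasCompactSupport hFs
  have hI2 : Integrable (fun x : ℝ => e x * deriv g x) := by
    refine ((hce.continuous.mul (hg.continuous_deriv le_rfl)).integrable_of_hasCompactSupport ?_)
    apply hgs.deriv.mono
    intro x hx
    simp only [Function.mem_support] at hx ⊢
    intro h0; exact hx (by simp [h0])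
  have hsplit : (∫ x in Ioi (0 : ℝ), (c * e x * g x + e x * deriv g x))
      = c * (∫ x in Ioi (0 : ℝ), e x * g x) + ∫ x in Ioi (0 : ℝ), e x * deriv g x := by
    have hfun : ∀ x : ℝ, c * e x * g x + e x * deriv g x
        = c * (e x * g x) + e x * deriv g x := fun x => by ring
    simp_rw [hfun]
    rw [integral_add ((hI1.integrableOn).const_mul c) hI2.integrableOn,
      MeasureTheory.integral_const_mul]
  rw [hsplit] at key
  have hF0 : F 0 = g 0 := by simp [hF, he]
  rw [hF0] at key
  linear_combination key

/-- For `f` C² supported in an interval of length `L` with `f 0 = 1`, and bounds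
`|f'| ≤ M₁`, `|f''| ≤ M₂`, for all `k ≠ 0`:
`‖∫_0^∞ e^{ikx} f(x) dx - i/k‖ ≤ (M₁ + L M₂)/k²`. -/
theorem stmt6 (f : ℝ → ℂ) (hf : ContDiff ℝ 2 f) (hsupp : HasCompactSupport f)
    (L a : ℝ) (hL : tsupport f ⊆ Icc a (a + L)) (hf0 : f 0 = 1)
    (M₁ M₂ : ℝ) (hM₁ : 0 ≤ M₁) (hM₂ : 0 ≤ M₂)
    (h1 : ∀ x : ℝ, ‖deriv f x‖ ≤ M₁) (h2 : ∀ x : ℝ, ‖deriv (deriv f) x‖ ≤ M₂) :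
    ∀ k : ℝ, k ≠ 0 →
      ‖(∫ x in Ioi (0 : ℝ), Complex.exp (Complex.I * (k : ℂ) * (x : ℂ)) * f x)
          - Complex.I / (k : ℂ)‖ ≤ (M₁ + L * M₂) / k ^ 2 := by
  intro k hk
  have hkc : (k : ℂ) ≠ 0 := Complex.ofReal_ne_zero.2 hk
  have hk2 : ((k : ℂ)) ^ 2 ≠ 0 := pow_ne_zero _ hkc
  have hf1 : ContDiff ℝ 1 f := hf.of_le (by norm_num)
  have hdf : ContDiff ℝ 1 (deriv f) := by
    have h' : ContDiff ℝ (1 + 1) f := by norm_num; exact hf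
    exact (contDiff_succ_iff_deriv.mp h').2.2
  set c : ℂ := Complex.I * (k : ℂ) with hc
  have e1 := parts_aux c f hf1 hsupp
  have e2 := parts_aux c (deriv f) hdf hsupp.deriv
  rw [hf0] at e1
  set I0 : ℂ := ∫ x in Ioi (0 : ℝ), Complex.exp (c * x) * f x with hI0
  set I1 : ℂ := ∫ x in Ioi (0 : ℝ), Complex.exp (c * x) * deriv f x with hI1
  set I2 : ℂ := ∫ x in Ioi (0 : ℝ), Complex.exp (c * x) * deriv (deriv f) x with hI2
  -- key algebraic identity
  have key2 : (k : ℂ) ^ 2 * I0 - Complex.I * k = -(deriv f 0 + I2) := by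
    linear_combination (-(Complex.I * (k : ℂ))) * e1 + e2
      + ((k : ℂ) ^ 2 * I0) * Complex.I_sq
  have key : I0 - Complex.I / (k : ℂ) = -(deriv f 0 + I2) / (k : ℂ) ^ 2 := by
    rw [eq_div_iff hk2, ← key2]
    field_simp
  -- support and nonnegativity facts
  have h0mem : (0 : ℝ) ∈ tsupport f :=
    subset_closure (by simp [Function.mem_support, hf0])
  have hmem := hL h0mem
  have hLnn : 0 ≤ L := by
    have := hmem.1; have := hmem.2; linarith
  -- norm of exponential is 1
  have hnorm_e : ∀ x : ℝ, ‖Complex.exp (c * x)‖ = 1 := by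
    intro x
    rw [Complex.norm_exp]
    have : (c * x).re = 0 := by
      simp [hc, Complex.mul_re, Complex.mul_im]
    rw [this, Real.exp_zero]
  -- f'' vanishes outside Icc a (a+L)
  have hsub2 : Function.support (deriv (deriv f)) ⊆ Icc a (a + L) := by
    refine support_deriv_subset.trans ?_
    refine (closure_mono support_deriv_subset).trans ?_
    exact closure_minimal hL isClosed_Icc
  have hcont2 : Continuous (deriv (deriv f)) := by
    exact hdf.continuous_deriv le_rfl
  have hint2 : Integrable (fun x : ℝ => ‖deriv (deriv f) x‖) := by
    exact (hcont2.norm).integrable_of_hasCompactSupport hsupp.deriv.deriv.norm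
  -- bound on I2
  have hI2b : ‖I2‖ ≤ L * M₂ := by
    calc ‖I2‖ ≤ ∫ x in Ioi (0 : ℝ), ‖Complex.exp (c * x) * deriv (deriv f) x‖ :=
          norm_integral_le_integral_norm _
      _ = ∫ x in Ioi (0 : ℝ), ‖deriv (deriv f) x‖ := by
          simp_rw [norm_mul, hnorm_e, one_mul]
      _ ≤ ∫ x : ℝ, ‖deriv (deriv f) x‖ :=
          setIntegral_le_integral hint2 (Eventually.of_forall fun x => norm_nonneg _)
      _ = ∫ x in Icc a (a + L), ‖deriv (deriv f) x‖ := by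
          refine (setIntegral_eq_integral_of_forall_compl_eq_zero fun x hx => ?_).symm
          have : deriv (deriv f) x = 0 := by
            by_contra h
            exact hx (hsub2 h)
          simp [this]
      _ ≤ ∫ _x in Icc a (a + L), M₂ := by
          refine setIntegral_mono_on hint2.integrableOn (integrableOn_const ?_)
            measurableSet_Icc fun x _ => h2 x
          rw [Real.volume_Icc]
          exact ENNReal.ofReal_ne_top
      _ = L * M₂ := by
          rw [setIntegral_const, smul_eq_mul, measureReal_def, Real.volume_Icc]
          congr 1
          rw [show a + L - a = L by ring, ENNReal.toReal_ofReal hLnn]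
  -- finish
  rw [key, norm_div, norm_neg]
  have hknorm : ‖((k : ℂ)) ^ 2‖ = k ^ 2 := by
    rw [norm_pow, Complex.norm_real, Real.norm_eq_abs, sq_abs]
  rw [hknorm]
  have hk2pos : (0 : ℝ) < k ^ 2 := by positivity
  gcongr
  calc ‖deriv f 0 + I2‖ ≤ ‖deriv f 0‖ + ‖I2‖ := norm_add_le _ _
    _ ≤ M₁ + L * M₂ := add_le_add (h1 0) hI2b
end

section
/- Let ε > 0 and k ∈ ℝ. Then x ↦ e^{ikx}/(x + iε)² is absolutely integrable on ℝ and ∫_ℝ e^{ikx}/(x + iε)² dx equals 2πk e^{εk} if k ≤ 0, and equals 0 if k ≥ 0. (This is consistent with the identity (x+i0⁺)^{-2} = −d/dx (x+i0⁺)^{-1} and with the paper's computation that the square of 1/(x+i0⁺) has Fourier transform 2πk θ(−k).) -/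
open MeasureTheory Filter Set

open Complex Topology FourierTransform Real in
private lemma keyInt8 {c : ℂ} (hc : 0 < c.re) :
    IntegrableOn (fun t : ℝ => (t : ℂ) * Complex.exp (c * t)) (Iic (0:ℝ)) := by
  rw [← (Measure.measurePreserving_neg (volume : Measure ℝ)).integrableOn_comp_preimage
      (Homeomorph.neg ℝ).measurableEmbedding]
  simp only [Function.comp_def, neg_preimage, neg_Iic, neg_zero]
  rw [integrableOn_Ici_iff_integrableOn_Ioi]
  have hreal : IntegrableOn (fun x : ℝ => x * Real.exp (-c.re * x)) (Ioi 0) := by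
    simpa using integrableOn_rpow_mul_exp_neg_mul_rpow (s := 1) (p := 1) (by norm_num) one_pos hc
  apply Integrable.mono' hreal
  · apply Continuous.aestronglyMeasurable
    exact ((Complex.continuous_ofReal.comp continuous_neg).mul
      (Complex.continuous_exp.comp (continuous_const.mul
        (Complex.continuous_ofReal.comp continuous_neg))))
  · filter_upwards [ae_restrict_mem measurableSet_Ioi] with x hx
    rw [norm_mul, show ‖cexp (c * (-x:ℝ))‖ = Real.exp ((c * (-x:ℝ)).re) from Complex.norm_exp _]
    simp only [Complex.ofReal_neg, Complex.norm_real, norm_neg, Real.norm_eq_abs,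
      _root_.abs_of_pos (mem_Ioi.mp hx)]
    rw [show (c * (-x : ℂ)).re = -c.re * x by simp [Complex.mul_re]]

open Complex Topology FourierTransform Real in
private lemma keyEval8 {c : ℂ} (hc : 0 < c.re) :
    ∫ t in Iic (0:ℝ), (t : ℂ) * Complex.exp (c * t) = -1 / c ^ 2 := by
  have hc0 : c ≠ 0 := fun h => by simp [h] at hc
  set F : ℝ → ℂ := fun t => ((t : ℂ) / c - 1 / c ^ 2) * Complex.exp (c * t) with hF
  have hderiv : ∀ x ∈ Iic (0:ℝ), HasDerivAt F ((x : ℂ) * Complex.exp (c * x)) x := by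
    intro x _
    have hid : HasDerivAt (fun t : ℝ => (t : ℂ)) 1 x := by
      simpa using (hasDerivAt_id x).ofReal_comp
    have hexp : HasDerivAt (fun t : ℝ => Complex.exp (c * t)) (Complex.exp (c * x) * c) x := by
      simpa [mul_comm] using ((hid.const_mul c).cexp)
    have := ((hid.div_const c).sub_const (1 / c ^ 2)).mul hexp
    convert this using 1
    · rfl
    · rfl
    field_simp
    ring
  have htends : Tendsto F atBot (𝓝 0) := by
    have h1 : Tendsto (fun s : ℝ => F (-s)) atTop (𝓝 0) := by
      apply squeeze_zero_norm' (a := fun s : ℝ =>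
        (1 / ‖c‖) * (s * Real.exp (-c.re * s)) + ‖(1:ℂ) / c ^ 2‖ * Real.exp (-c.re * s))
      · filter_upwards [eventually_ge_atTop (0:ℝ)] with s hs
        have h2 : ‖F (-s)‖ ≤ (‖((-s : ℝ) : ℂ) / c‖ + ‖(1:ℂ) / c ^ 2‖) *
            Real.exp ((c * ((-s : ℝ) : ℂ)).re) := by
          rw [hF]
          simp only [norm_mul]
          gcongr
          · exact norm_sub_le _ _
          · exact le_of_eq (Complex.norm_exp _)
        refine h2.trans (le_of_eq ?_)
        have : (c * ((-s : ℝ) : ℂ)).re = -c.re * s := by simp [Complex.mul_re]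
        rw [this]
        rw [norm_div]
        simp only [Complex.ofReal_neg, norm_neg, Complex.norm_real, Real.norm_eq_abs,
          _root_.abs_of_nonneg hs]
        ring
      · have hA : Tendsto (fun s : ℝ => s * Real.exp (-c.re * s)) atTop (𝓝 0) := by
          simpa using tendsto_rpow_mul_exp_neg_mul_atTop_nhds_zero 1 c.re hc
        have hB : Tendsto (fun s : ℝ => Real.exp (-c.re * s)) atTop (𝓝 0) :=
          Real.tendsto_exp_atBot.comp
            (tendsto_id.const_mul_atTop_of_neg (by linarith) |>.comp tendsto_id)
        have := (hA.const_mul (1 / ‖c‖)).add (hB.const_mul ‖(1:ℂ) / c ^ 2‖)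
        simpa using this
    have := h1.comp tendsto_neg_atBot_atTop
    simpa [Function.comp_def] using this
  rw [MeasureTheory.integral_Iic_of_hasDerivAt_of_tendsto' hderiv (keyInt8 hc) htends]
  simp [hF]
  field_simp

private noncomputable def g8 (ε : ℝ) (t : ℝ) : ℂ :=
  ((min t 0 : ℝ) : ℂ) * Complex.exp ((ε : ℂ) * ((min t 0 : ℝ) : ℂ))

private lemma g8_cont (ε : ℝ) : Continuous (g8 ε) := by
  unfold g8; fun_prop

private lemma g8_int {ε : ℝ} (hε : 0 < ε) : Integrable (g8 ε) := by
  rw [← integrableOn_univ, ← Iic_union_Ioi (a := (0:ℝ)), integrableOn_union]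
  constructor
  · apply (keyInt8 (c := (ε : ℂ)) (by simpa using hε)).congr_fun ?_ measurableSet_Iic
    intro t ht
    simp [g8, min_eq_left (mem_Iic.mp ht)]
  · apply (integrableOn_zero (ε' := ℂ)).congr_fun ?_ measurableSet_Ioi
    intro t ht
    simp [g8, min_eq_right (le_of_lt (mem_Ioi.mp ht))]

open Complex Topology FourierTransform Real in
private lemma fourier_g8 {ε : ℝ} (hε : 0 < ε) (x : ℝ) :
    𝓕 (g8 ε) x = 1 / ((2 * π * x : ℂ) + (ε : ℂ) * Complex.I) ^ 2 := by
  set c : ℂ := (ε : ℂ) - 2 * π * x * Complex.I with hcdef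
  have hc : (0:ℝ) < c.re := by simp [hcdef, hε]
  have hint : Integrable (fun v : ℝ => Complex.exp (↑(-2 * π * v * x) * Complex.I) • g8 ε v) := by
    apply (g8_int hε).bdd_mul (c := 1) ?_ (Eventually.of_forall fun v => ?_)
    · apply Continuous.aestronglyMeasurable; fun_prop
    · rw [show ‖Complex.exp ((((-2) * π * v * x : ℝ) : ℂ) * Complex.I)‖
          = Real.exp (((((-2) * π * v * x : ℝ) : ℂ) * Complex.I).re) from Complex.norm_exp _]
      simp
  rw [Real.fourier_real_eq_integral_exp_smul]
  have hsplit : ∫ v : ℝ, Complex.exp (↑(-2 * π * v * x) * Complex.I) • g8 ε v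
      = (∫ v in Iic (0:ℝ), Complex.exp (↑(-2 * π * v * x) * Complex.I) • g8 ε v)
        + ∫ v in Ioi (0:ℝ), Complex.exp (↑(-2 * π * v * x) * Complex.I) • g8 ε v := by
    rw [← setIntegral_union (Iic_disjoint_Ioi le_rfl) measurableSet_Ioi
      hint.integrableOn hint.integrableOn, Iic_union_Ioi, setIntegral_univ]
  rw [hsplit]
  have h2 : ∫ v in Ioi (0:ℝ), Complex.exp (↑(-2 * π * v * x) * Complex.I) • g8 ε v = 0 := by
    apply setIntegral_eq_zero_of_forall_eq_zero
    intro v hv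
    simp [g8, min_eq_right (le_of_lt (mem_Ioi.mp hv))]
  have h1 : ∫ v in Iic (0:ℝ), Complex.exp (↑(-2 * π * v * x) * Complex.I) • g8 ε v
      = ∫ v in Iic (0:ℝ), (v : ℂ) * Complex.exp (c * v) := by
    apply setIntegral_congr_fun measurableSet_Iic
    intro v hv
    have hm : min v 0 = v := min_eq_left (mem_Iic.mp hv)
    simp only [g8, hm, smul_eq_mul]
    rw [mul_comm, mul_assoc, ← Complex.exp_add]
    congr 2
    push_cast [hcdef]
    ring
  rw [h1, h2, add_zero, keyEval8 hc]
  have hc' : c = -Complex.I * ((2 * π * x : ℂ) + (ε : ℂ) * Complex.I) := by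
    rw [hcdef]; ring_nf; rw [Complex.I_sq]; ring
  have hsq : c ^ 2 = -((2 * π * x : ℂ) + (ε : ℂ) * Complex.I) ^ 2 := by
    rw [hc', mul_pow, show ((-Complex.I)^2 : ℂ) = -1 by rw [neg_pow, Complex.I_sq]; ring]
    ring
  rw [hsq, div_neg, neg_div, neg_neg]

private lemma dom_int8 {a ε : ℝ} (ha : a ≠ 0) (hε : 0 < ε) :
    Integrable (fun x : ℝ => ((a * x) ^ 2 + ε ^ 2)⁻¹) := by
  have h1 : Integrable (fun x : ℝ => (1 + ((a / ε) * x) ^ 2)⁻¹) :=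
    integrable_inv_one_add_sq.comp_mul_left' (div_ne_zero ha hε.ne')
  have h2 := h1.const_mul ((ε ^ 2)⁻¹)
  have heq : (fun x : ℝ => ((a * x) ^ 2 + ε ^ 2)⁻¹)
      = fun x : ℝ => (ε ^ 2)⁻¹ * (1 + ((a / ε) * x) ^ 2)⁻¹ := by
    funext x
    rw [← mul_inv, ← inv_eq_iff_eq_inv, inv_inv]
    field_simp
    ring
  rw [heq]
  exact h2

private lemma norm_inv_sq8 {z : ℂ} :
    ‖(1 : ℂ) / z ^ 2‖ = ((z.re) ^ 2 + (z.im) ^ 2)⁻¹ := by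
  rw [norm_div, norm_one, norm_pow,
    show ‖z‖ ^ 2 = Complex.normSq z from Complex.sq_norm z, Complex.normSq_apply, one_div]
  ring_nf

open Complex Topology FourierTransform Real in
private lemma fourier_g8_int {ε : ℝ} (hε : 0 < ε) : Integrable (𝓕 (g8 ε)) := by
  have hform : 𝓕 (g8 ε) = fun x : ℝ => 1 / ((2 * π * x : ℂ) + (ε : ℂ) * Complex.I) ^ 2 :=
    funext fun x => fourier_g8 hε x
  rw [hform]
  have hz : ∀ x : ℝ, ((2 * π * x : ℂ) + (ε : ℂ) * Complex.I) ≠ 0 := by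
    intro x h
    have := congrArg Complex.im h
    simp at this
    exact hε.ne' this
  apply (dom_int8 (a := 2 * π) (by positivity) hε).mono'
  · apply Continuous.aestronglyMeasurable
    exact continuous_const.div (by fun_prop) (fun x => pow_ne_zero 2 (hz x))
  · filter_upwards with x
    rw [norm_inv_sq8]
    apply le_of_eq
    congr 1
    simp

/-- `x ↦ e^{ikx}/(x+iε)²` is absolutely integrable and its integral is
`2πk e^{εk}` for `k ≤ 0` and `0` for `k ≥ 0`. -/
theorem stmt8 (ε : ℝ) (hε : 0 < ε) (k : ℝ) :
    Integrable (fun x : ℝ =>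
      Complex.exp (Complex.I * (k : ℂ) * (x : ℂ)) / ((x : ℂ) + (ε : ℂ) * Complex.I) ^ 2) ∧
    (k ≤ 0 → ∫ x : ℝ,
        Complex.exp (Complex.I * (k : ℂ) * (x : ℂ)) / ((x : ℂ) + (ε : ℂ) * Complex.I) ^ 2
      = 2 * (Real.pi : ℂ) * (k : ℂ) * Complex.exp ((ε : ℂ) * (k : ℂ))) ∧
    (0 ≤ k → ∫ x : ℝ,
        Complex.exp (Complex.I * (k : ℂ) * (x : ℂ)) / ((x : ℂ) + (ε : ℂ) * Complex.I) ^ 2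
      = 0) := by
  open Complex Topology FourierTransform Real in
  set f : ℝ → ℂ := fun x : ℝ =>
    Complex.exp (Complex.I * (k : ℂ) * (x : ℂ)) / ((x : ℂ) + (ε : ℂ) * Complex.I) ^ 2 with hfdef
  have hz : ∀ x : ℝ, ((x : ℂ) + (ε : ℂ) * Complex.I) ≠ 0 := by
    intro x h
    have := congrArg Complex.im h
    simp at this
    exact hε.ne' this
  have hfc : Continuous f := by
    apply Continuous.div (by fun_prop) (by fun_prop)
    exact fun x => pow_ne_zero 2 (hz x)
  have hfint : Integrable f := by
    apply (dom_int8 (a := 1) one_ne_zero hε).mono' hfc.aestronglyMeasurable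
    filter_upwards with x
    rw [hfdef]
    simp only
    rw [div_eq_mul_one_div, norm_mul, norm_inv_sq8,
      show ‖Complex.exp (Complex.I * (k : ℂ) * (x : ℂ))‖
        = Real.exp ((Complex.I * (k : ℂ) * (x : ℂ)).re) from Complex.norm_exp _]
    simp [Complex.mul_re]
  have hval : ∫ x, f x = (2 * Real.pi : ℝ) • g8 ε k := by
    have h1 := MeasureTheory.Measure.integral_comp_mul_left f (2 * Real.pi)
    have h2 : ∫ x : ℝ, f (2 * Real.pi * x) = g8 ε k := by
      have hpt : ∀ x : ℝ, f (2 * Real.pi * x)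
          = Complex.exp (((2 * Real.pi * (x * k) : ℝ) : ℂ) * Complex.I) • 𝓕 (g8 ε) x := by
        intro x
        rw [fourier_g8 hε x, hfdef]
        simp only [smul_eq_mul]
        rw [div_eq_mul_one_div]
        congr 2
        all_goals (push_cast; ring)
      rw [MeasureTheory.integral_congr_ae (Eventually.of_forall hpt)]
      have h3 : ∫ x : ℝ, Complex.exp (((2 * Real.pi * (x * k) : ℝ) : ℂ) * Complex.I) • 𝓕 (g8 ε) x
          = 𝓕⁻ (𝓕 (g8 ε)) k := by
        rw [Real.fourierInv_eq']
        simp only [RCLike.inner_apply, conj_trivial]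
        simp_rw [mul_comm k]
      rw [h3, (g8_cont ε).fourierInv_fourier_eq (g8_int hε) (fourier_g8_int hε)]
    rw [h2] at h1
    rw [h1, smul_smul]
    rw [abs_of_pos (by positivity : (0:ℝ) < (2 * Real.pi)⁻¹)]
    rw [mul_inv_cancel₀ (by positivity : (2 * Real.pi : ℝ) ≠ 0), one_smul]
  refine ⟨hfint, fun hk => ?_, fun hk => ?_⟩
  · rw [hval]
    simp only [g8, min_eq_left hk]
    rw [Complex.real_smul]
    push_cast
    ring
  · rw [hval]
    simp [g8, min_eq_right hk]
end

section
/- Let F : ℝ → ℂ be measurable and bounded (‖F(q)‖ ≤ B for all q), and suppose F is fast decreasing on [0, ∞): for every integer N there is C_N ≥ 0 with ‖F(q)‖ ≤ C_N (1 + q)^{-N} for all q ≥ 0. Then for every k ∈ ℝ the function q ↦ F(q)·F(k − q) is absolutely integrable on ℝ. (This proves that the square of the distribution 1/(x + i0⁺) is well defined: its localized Fourier transform is fast decreasing in the positive direction only, and the convolution integral converges absolutely.) -/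
open MeasureTheory Filter Set

/-- If `F` is measurable, bounded, and fast decreasing on `[0,∞)`, then for every `k`
the convolution integrand `q ↦ F q * F (k - q)` is absolutely integrable on `ℝ`. -/
theorem stmt10 (F : ℝ → ℂ) (hF : Measurable F) (B : ℝ) (hB : ∀ q : ℝ, ‖F q‖ ≤ B)
    (hfast : ∀ N : ℕ, ∃ C : ℝ, 0 ≤ C ∧ ∀ q : ℝ, 0 ≤ q → ‖F q‖ ≤ C * (1 + q) ^ (-(N : ℤ))) :
    ∀ k : ℝ, Integrable (fun q : ℝ => F q * F (k - q)) := by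
  intro k
  obtain ⟨C, hC0, hC⟩ := hfast 2
  have hB0 : 0 ≤ B := le_trans (norm_nonneg _) (hB 0)
  -- majorant
  set g : ℝ → ℝ := fun q =>
    B * C * ((1 + q ^ 2)⁻¹ + (1 + (k - q) ^ 2)⁻¹) +
      Set.indicator (Icc k 0) (fun _ => B * B) q with hg
  have hgint : Integrable g := by
    apply Integrable.add
    · apply Integrable.const_mul
      apply Integrable.add integrable_inv_one_add_sq
      have := integrable_inv_one_add_sq.comp_sub_left k
      simpa using this
    · exact (integrableOn_const measure_Icc_lt_top.ne).integrable_indicator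
        measurableSet_Icc
  have hmeas : AEStronglyMeasurable (fun q : ℝ => F q * F (k - q)) volume :=
    (hF.aestronglyMeasurable.mul
      (hF.comp (measurable_const.sub measurable_id)).aestronglyMeasurable)
  refine Integrable.mono' hgint hmeas (Filter.Eventually.of_forall fun q => ?_)
  have key : ∀ x : ℝ, 0 ≤ x → ‖F x‖ ≤ C * (1 + x ^ 2)⁻¹ := by
    intro x hx
    refine (hC x hx).trans ?_
    have h1 : (0:ℝ) < 1 + x ^ 2 := by positivity
    have h2 : (0:ℝ) < 1 + x := by linarith
    have : (1 + x) ^ (-(2:ℕ):ℤ) = ((1 + x) ^ 2)⁻¹ := by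
      rw [zpow_neg, show ((2:ℕ):ℤ) = 2 from rfl, zpow_two, sq]
    rw [this]
    have hle : 1 + x ^ 2 ≤ (1 + x) ^ 2 := by nlinarith
    have := inv_anti₀ h1 hle
    nlinarith [mul_le_mul_of_nonneg_left this hC0]
  have hterm1 : 0 ≤ B * C * (1 + q ^ 2)⁻¹ := by positivity
  have hterm2 : 0 ≤ B * C * (1 + (k - q) ^ 2)⁻¹ := by positivity
  have hind : 0 ≤ Set.indicator (Icc k 0) (fun _ => B * B) q :=
    Set.indicator_nonneg (fun _ _ => by positivity) q
  rw [norm_mul]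
  rcases le_or_gt 0 q with hq | hq
  · have : ‖F q‖ * ‖F (k - q)‖ ≤ C * (1 + q ^ 2)⁻¹ * B :=
      mul_le_mul (key q hq) (hB _) (norm_nonneg _) (by positivity)
    simp only [hg, mul_add]
    nlinarith
  · rcases le_or_gt q k with hqk | hqk
    · have hkq : 0 ≤ k - q := by linarith
      have : ‖F q‖ * ‖F (k - q)‖ ≤ B * (C * (1 + (k - q) ^ 2)⁻¹) :=
        mul_le_mul (hB _) (key _ hkq) (norm_nonneg _) hB0
      simp only [hg, mul_add]
      nlinarith
    · have hmem : q ∈ Icc k 0 := ⟨le_of_lt hqk, le_of_lt hq⟩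
      have : ‖F q‖ * ‖F (k - q)‖ ≤ B * B :=
        mul_le_mul (hB _) (hB _) (norm_nonneg _) hB0
      have heq : Set.indicator (Icc k 0) (fun _ => B * B) q = B * B :=
        Set.indicator_of_mem hmem _
      simp only [hg]
      rw [heq]
      nlinarith
end

section
/- Let F : ℝ → ℂ be measurable and bounded, fast decreasing on [0, ∞) (for every integer N there is C_N with ‖F(q)‖ ≤ C_N(1+q)^{-N} for q ≥ 0), and suppose F(q) → c as q → −∞ for some constant c ≠ 0. Fix k ∈ ℝ and set I_M(k) = ∫_{−M}^{∞} F(q)·(c − F(k − q)) dq. Then ‖I_M(k)‖ → ∞ as M → +∞. (This proves that the product of 1/(x+i0⁺) and 1/(x−i0⁺) does not exist: no choice of localizing test function makes the convolution integral converge.) -/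
open MeasureTheory Filter Set

/-- If `F` is measurable, bounded, fast decreasing on `[0,∞)`, and `F(q) → c ≠ 0` as
`q → -∞`, then `I_M(k) = ∫_{-M}^∞ F(q)(c - F(k-q)) dq` satisfies `‖I_M(k)‖ → ∞`. -/
theorem stmt11 (F : ℝ → ℂ) (hF : Measurable F) (B : ℝ) (hB : ∀ q : ℝ, ‖F q‖ ≤ B)
    (hfast : ∀ N : ℕ, ∃ C : ℝ, 0 ≤ C ∧ ∀ q : ℝ, 0 ≤ q → ‖F q‖ ≤ C * (1 + q) ^ (-(N : ℤ)))
    (c : ℂ) (hc : c ≠ 0) (hlim : Tendsto F atBot (nhds c)) (k : ℝ) :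
    Tendsto (fun M : ℝ => ‖∫ q in Ici (-M), F q * (c - F (k - q))‖) atTop atTop := by
  set g : ℝ → ℂ := fun q => F q * (c - F (k - q)) with hgdef
  have hB0 : 0 ≤ B := (norm_nonneg _).trans (hB 0)
  have hgmeas : Measurable g :=
    hF.mul (measurable_const.sub (hF.comp (measurable_const.sub measurable_id)))
  have hgbound : ∀ q, ‖g q‖ ≤ B * (‖c‖ + B) := by
    intro q
    calc ‖g q‖ = ‖F q‖ * ‖c - F (k - q)‖ := norm_mul _ _
    _ ≤ B * (‖c‖ + B) :=
      mul_le_mul (hB q) ((norm_sub_le _ _).trans (by linarith [hB (k - q)]))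
        (norm_nonneg _) hB0
  obtain ⟨C, hC0, hC⟩ := hfast 2
  -- integrability on Ici 0
  have hint0 : IntegrableOn g (Ici 0) := by
    have hI : Integrable (fun q : ℝ => (C * (‖c‖ + B)) * (1 + ‖q‖) ^ (-(2:ℝ))) :=
      (integrable_one_add_norm (by norm_num)).const_mul _
    refine (hI.integrableOn).mono' (hgmeas.aestronglyMeasurable.restrict) ?_
    refine (ae_restrict_iff' measurableSet_Ici).2 (Eventually.of_forall ?_)
    intro q hq
    have hq0 : (0:ℝ) ≤ q := hq
    have h1 : (0:ℝ) < 1 + q := by linarith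
    have key : ((1 + q) ^ (-(2:ℕ):ℤ) : ℝ) = (1 + ‖q‖) ^ (-(2:ℝ)) := by
      rw [Real.norm_eq_abs, abs_of_nonneg hq0, ← Real.rpow_intCast (1+q) (-(2:ℕ):ℤ)]
      norm_num
    calc ‖g q‖ = ‖F q‖ * ‖c - F (k - q)‖ := norm_mul _ _
    _ ≤ (C * (1 + q) ^ (-(2:ℕ):ℤ)) * (‖c‖ + B) :=
      mul_le_mul (hC q hq0) ((norm_sub_le _ _).trans (by linarith [hB (k - q)]))
        (norm_nonneg _) (by positivity)
    _ = (C * (‖c‖ + B)) * (1 + ‖q‖) ^ (-(2:ℝ)) := by rw [← key]; ring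
  -- integrability on any Ici t
  have hint : ∀ t : ℝ, IntegrableOn g (Ici t) := by
    intro t
    rcases le_or_gt 0 t with ht | ht
    · exact hint0.mono_set (Ici_subset_Ici.2 ht)
    · have h1 : IntegrableOn g (Ico t 0) := by
        have hcst : IntegrableOn (fun _ : ℝ => B * (‖c‖ + B)) (Ico t 0) :=
          integrableOn_const measure_Ico_lt_top.ne
        exact hcst.mono' hgmeas.aestronglyMeasurable.restrict
          (Eventually.of_forall fun q => hgbound q)
      have := h1.union hint0
      rwa [Ico_union_Ici_eq_Ici ht.le] at this
  -- F tends to 0 at +infinity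
  have hFtop : Tendsto F atTop (nhds 0) := by
    obtain ⟨C₁, hC₁0, hC₁⟩ := hfast 1
    have h1 : Tendsto (fun q : ℝ => 1 + q) atTop atTop :=
      tendsto_atTop_add_const_left atTop 1 tendsto_id
    have h2 : Tendsto (fun q : ℝ => (1 + q)⁻¹) atTop (nhds 0) := h1.inv_tendsto_atTop
    have hb : Tendsto (fun q : ℝ => C₁ * (1 + q)⁻¹) atTop (nhds (C₁ * 0)) := h2.const_mul C₁
    rw [mul_zero] at hb
    refine squeeze_zero_norm' ?_ hb
    filter_upwards [eventually_ge_atTop (0:ℝ)] with q hq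
    have := hC₁ q hq
    simpa [zpow_neg, zpow_one] using this
  -- g tends to c*c at -infinity
  have hgm : Tendsto g atBot (nhds (c * c)) := by
    have h1 : Tendsto (fun q : ℝ => k - q) atBot atTop := by
      have h0 : Tendsto (fun q : ℝ => -q) atBot atTop := tendsto_neg_atBot_atTop
      simpa [sub_eq_add_neg] using tendsto_atTop_add_const_left atBot k h0
    have h2 : Tendsto (fun q => F (k - q)) atBot (nhds 0) := hFtop.comp h1
    have := hlim.mul (tendsto_const_nhds (x := c) |>.sub h2)
    simpa using this
  -- choose a
  have hcc : 0 < ‖c * c‖ := norm_pos_iff.2 (mul_ne_zero hc hc)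
  obtain ⟨a, ha⟩ : ∃ a : ℝ, ∀ q ≤ a, ‖g q - c * c‖ ≤ ‖c * c‖ / 2 := by
    have := (hgm.eventually (Metric.ball_mem_nhds (c*c) (by linarith : (0:ℝ) < ‖c*c‖/2)))
    rw [eventually_atBot] at this
    obtain ⟨a, ha⟩ := this
    exact ⟨a, fun q hq => le_of_lt (by simpa [dist_eq_norm] using ha q hq)⟩
  set T : ℂ := ∫ q in Ici a, g q with hT
  -- main bound for M ≥ -a
  have main : ∀ M : ℝ, -a ≤ M → (M + a) * (‖c*c‖/2) - ‖T‖ ≤ ‖∫ q in Ici (-M), g q‖ := by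
    intro M hM
    have hMa : -M ≤ a := by linarith
    have hsplit : ∫ q in Ici (-M), g q = (∫ q in Ico (-M) a, g q) + T := by
      rw [hT, ← setIntegral_union]
      · rw [Ico_union_Ici_eq_Ici hMa]
      · exact (Iio_disjoint_Ici le_rfl).mono_left Ico_subset_Iio_self
      · exact measurableSet_Ici
      · exact (hint (-M)).mono_set (Ico_subset_Ici_self)
      · exact hint a
    have hvol : (volume (Ico (-M) a)).toReal = M + a := by
      rw [Real.volume_Ico, ENNReal.toReal_ofReal (by linarith)]
      ring
    have hmain : (M + a) * (‖c*c‖/2) ≤ ‖∫ q in Ico (-M) a, g q‖ := by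
      have hi1 : IntegrableOn g (Ico (-M) a) := (hint (-M)).mono_set Ico_subset_Ici_self
      have heq : (∫ q in Ico (-M) a, g q)
          = (∫ q in Ico (-M) a, (g q - c * c)) + (M + a) • (c * c) := by
        rw [integral_sub hi1 (integrableOn_const measure_Ico_lt_top.ne)]
        rw [setIntegral_const, measureReal_def, Real.volume_Ico, ENNReal.toReal_ofReal (by linarith),
          show a - -M = M + a from by ring]
        abel
      have hb2 : ‖∫ q in Ico (-M) a, (g q - c * c)‖ ≤ (‖c*c‖/2) * (M + a) := by
        have := norm_setIntegral_le_of_norm_le_const (μ := volume)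
          (s := Ico (-M) a) (f := fun q => g q - c * c) (C := ‖c*c‖/2)
          measure_Ico_lt_top
          (fun x hx => ha x (le_of_lt hx.2))
        rwa [measureReal_def, hvol] at this
      rw [heq]
      set A := ∫ q in Ico (-M) a, (g q - c * c) with hA
      have h3 : ‖(M + a) • (c * c)‖ ≤ ‖(M + a) • (c * c) + A‖ + ‖A‖ :=
        norm_le_add_norm_add _ _
      have h4 : ‖(M + a) • (c * c)‖ = (M + a) * ‖c * c‖ := by
        rw [norm_smul, Real.norm_eq_abs, abs_of_nonneg (by linarith)]
      rw [add_comm A]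
      rw [h4] at h3
      linarith
    calc (M + a) * (‖c*c‖/2) - ‖T‖ ≤ ‖∫ q in Ico (-M) a, g q‖ - ‖T‖ := by linarith
    _ ≤ ‖(∫ q in Ico (-M) a, g q) + T‖ := by
        have := norm_le_add_norm_add (∫ q in Ico (-M) a, g q) T
        linarith
    _ = ‖∫ q in Ici (-M), g q‖ := by rw [hsplit]
  -- conclude
  have hlin : Tendsto (fun M : ℝ => (M + a) * (‖c*c‖/2) - ‖T‖) atTop atTop := by
    apply tendsto_atTop_add_const_right
    exact (tendsto_atTop_add_const_right atTop a tendsto_id).atTop_mul_const (by linarith)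
  refine tendsto_atTop_mono' atTop ?_ hlin
  filter_upwards [eventually_ge_atTop (-a)] with M hM
  exact main M hM
end

section
/- Let n ≥ 1, let u : ℝⁿ → ℂ (ℝⁿ with the Euclidean inner product) be integrable, and let ν ∈ ℝⁿ be a unit vector. For s ∈ ℝ define the Radon transform R(u)(ν, s) = ∫_{ν^⊥} u(sν + y) dy, where ν^⊥ is the orthogonal complement of the line ℝν with its canonical Lebesgue measure. Then for every k ∈ ℝ, the Fourier transform of u along the ray through ν satisfies û(kν) = ∫_ℝ e^{iks} R(u)(ν, s) ds, where û(p) = ∫_{ℝⁿ} e^{i⟨p,x⟩} u(x) dx. -/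
open MeasureTheory Filter Set
open scoped RealInnerProductSpace

theorem aux_measurePreserving {n : ℕ} (ν : EuclideanSpace ℝ (Fin n)) (hν : ‖ν‖ = 1) :
    MeasurePreserving
      (fun p : ℝ × (Submodule.span ℝ {ν})ᗮ => p.1 • ν + (p.2 : EuclideanSpace ℝ (Fin n)))
      (volume.prod volume) volume := by
  set K := Submodule.span ℝ ({ν} : Set (EuclideanSpace ℝ (Fin n)))
  set b := stdOrthonormalBasis ℝ Kᗮ
  set m := Module.finrank ℝ Kᗮ
  set v : Unit ⊕ Fin m → EuclideanSpace ℝ (Fin n) :=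
    Sum.elim (fun _ => ν) (fun i => (b i : EuclideanSpace ℝ (Fin n))) with hv
  have hνK : ν ∈ K := Submodule.mem_span_singleton_self ν
  have hbo : Orthonormal ℝ b := b.orthonormal
  have hon : Orthonormal ℝ v := by
    rw [orthonormal_iff_ite]
    rintro (i | i) (j | j)
    · simp only [v, Sum.elim_inl]
      rw [if_pos trivial, real_inner_self_eq_norm_sq, hν, one_pow]
    · simpa [v] using (Submodule.inner_right_of_mem_orthogonal hνK (b j).2)
    · simpa [v] using (Submodule.inner_left_of_mem_orthogonal hνK (b i).2)
    · have := (orthonormal_iff_ite.mp hbo) i j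
      simpa [v, Submodule.coe_inner, Sum.inr.injEq] using this
  have htop : Submodule.span ℝ (Set.range ⇑b) = ⊤ := by
    rw [← b.coe_toBasis]; exact b.toBasis.span_eq
  have hKb : Kᗮ = Submodule.span ℝ (Set.range fun i => (b i : EuclideanSpace ℝ (Fin n))) :=
    calc Kᗮ = Submodule.map Kᗮ.subtype ⊤ := (Submodule.map_subtype_top Kᗮ).symm
    _ = Submodule.map Kᗮ.subtype (Submodule.span ℝ (Set.range ⇑b)) := by rw [htop]
    _ = Submodule.span ℝ (Kᗮ.subtype '' Set.range ⇑b) := Submodule.map_span _ _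
    _ = Submodule.span ℝ (Set.range fun i => (b i : EuclideanSpace ℝ (Fin n))) := by
        rw [← Set.range_comp]; rfl
  have hspan : ⊤ ≤ Submodule.span ℝ (Set.range v) := by
    rw [← Submodule.sup_orthogonal_of_hasOrthogonalProjection (K := K)]
    apply sup_le
    · rw [Submodule.span_singleton_le_iff_mem]
      exact Submodule.subset_span ⟨Sum.inl (), rfl⟩
    · rw [hKb]
      apply Submodule.span_mono
      rintro x ⟨i, rfl⟩
      exact ⟨Sum.inr i, rfl⟩
  let B : OrthonormalBasis (Unit ⊕ Fin m) ℝ (EuclideanSpace ℝ (Fin n)) :=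
    OrthonormalBasis.mk hon hspan
  -- the chain of measure preserving maps
  have h1 : MeasurePreserving
      (fun p : ℝ × (Submodule.span ℝ {ν})ᗮ => (p.1, b.repr p.2))
      (volume.prod volume) (volume.prod volume) :=
    (MeasurePreserving.id volume).prod b.measurePreserving_repr
  have h2 : MeasurePreserving
      (fun p : ℝ × EuclideanSpace ℝ (Fin m) =>
        ((MeasurableEquiv.funUnique Unit ℝ).symm p.1, (MeasurableEquiv.toLp 2 (Fin m → ℝ)).symm p.2))
      (volume.prod volume) (volume.prod volume) :=
    ((volume_preserving_funUnique Unit ℝ).symm _).prod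
      (EuclideanSpace.volume_preserving_symm_measurableEquiv_toLp (Fin m))
  have h3 : MeasurePreserving
      (MeasurableEquiv.sumPiEquivProdPi (fun _ : Unit ⊕ Fin m => ℝ)).symm
      (volume.prod volume) volume :=
    volume_measurePreserving_sumPiEquivProdPi_symm _
  have h4 : MeasurePreserving
      (MeasurableEquiv.toLp 2 (Unit ⊕ Fin m → ℝ)) volume volume :=
    (EuclideanSpace.volume_preserving_symm_measurableEquiv_toLp (Unit ⊕ Fin m)).symm _
  have h5 : MeasurePreserving (B.repr.symm : EuclideanSpace ℝ (Unit ⊕ Fin m) → _)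
      volume volume := B.measurePreserving_repr_symm
  have hΦ := ((h5.comp h4).comp h3).comp (h2.comp h1)
  have hfun : (fun p : ℝ × (Submodule.span ℝ {ν})ᗮ =>
      p.1 • ν + (p.2 : EuclideanSpace ℝ (Fin n))) =
      ((B.repr.symm : EuclideanSpace ℝ (Unit ⊕ Fin m) → _) ∘
        (MeasurableEquiv.toLp 2 (Unit ⊕ Fin m → ℝ)) ∘
        (MeasurableEquiv.sumPiEquivProdPi (fun _ : Unit ⊕ Fin m => ℝ)).symm ∘
        (fun p : ℝ × EuclideanSpace ℝ (Fin m) =>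
          ((MeasurableEquiv.funUnique Unit ℝ).symm p.1,
            (MeasurableEquiv.toLp 2 (Fin m → ℝ)).symm p.2)) ∘
        (fun p : ℝ × (Submodule.span ℝ {ν})ᗮ => (p.1, b.repr p.2))) := by
    funext p
    obtain ⟨s, y⟩ := p
    simp only [Function.comp_apply]
    have hw : ((MeasurableEquiv.toLp 2 (Unit ⊕ Fin m → ℝ))
        ((MeasurableEquiv.sumPiEquivProdPi (fun _ : Unit ⊕ Fin m => ℝ)).symm
          (((MeasurableEquiv.funUnique Unit ℝ).symm s),
            (MeasurableEquiv.toLp 2 (Fin m → ℝ)).symm (b.repr y))))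
        = WithLp.toLp 2 (fun i => Sum.elim (fun _ : Unit => s) (fun i => b.repr y i) i) := by
      ext i
      cases i <;> rfl
    rw [hw, ← B.sum_repr_symm, Fintype.sum_sum_type]
    have hB : ∀ i, B i = v i := fun i => congrFun (OrthonormalBasis.coe_mk hon hspan) i
    have hc : ∑ i : Fin m, b.repr y i • ((b i : EuclideanSpace ℝ (Fin n)))
        = ((∑ i : Fin m, b.repr y i • b i : Kᗮ) : EuclideanSpace ℝ (Fin n)) := by
      norm_cast
    simp only [hB, hv, Sum.elim_inl, Sum.elim_inr, hc, b.sum_repr]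
    simp
  rw [hfun]
  exact hΦ

theorem aux_injective {n : ℕ} (ν : EuclideanSpace ℝ (Fin n)) (hν : ‖ν‖ = 1) :
    Function.Injective
      (fun p : ℝ × (Submodule.span ℝ {ν})ᗮ => p.1 • ν + (p.2 : EuclideanSpace ℝ (Fin n))) := by
  rintro ⟨s, y⟩ ⟨t, z⟩ h
  simp only [Prod.mk.injEq] at h ⊢
  have hνy : ⟪ν, (y : EuclideanSpace ℝ (Fin n))⟫ = 0 :=
    Submodule.inner_right_of_mem_orthogonal (Submodule.mem_span_singleton_self ν) y.2
  have hνz : ⟪ν, (z : EuclideanSpace ℝ (Fin n))⟫ = 0 :=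
    Submodule.inner_right_of_mem_orthogonal (Submodule.mem_span_singleton_self ν) z.2
  have hst : s = t := by
    have := congrArg (fun x => ⟪ν, x⟫) h
    simp only [inner_add_right, real_inner_smul_right, hνy, hνz, add_zero,
      real_inner_self_eq_norm_sq, hν, one_pow, mul_one] at this
    exact this
  subst hst
  refine ⟨rfl, ?_⟩
  have : (y : EuclideanSpace ℝ (Fin n)) = z := by
    have := h
    simpa using add_left_cancel this
  exact Subtype.ext this


/-- Radon transform and Fourier transform: for integrable `u` on ℝⁿ and a unit vector `ν`,
`û(kν) = ∫ e^{iks} R(u)(ν,s) ds` where `R(u)(ν,s) = ∫_{ν^⊥} u(sν + y) dy`. -/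
theorem stmt13 (n : ℕ) (hn : 1 ≤ n) (u : EuclideanSpace ℝ (Fin n) → ℂ)
    (hu : Integrable u) (ν : EuclideanSpace ℝ (Fin n)) (hν : ‖ν‖ = 1) :
    ∀ k : ℝ,
      (∫ x, Complex.exp (Complex.I * ((k : ℂ) * (⟪ν, x⟫ : ℝ))) * u x)
        = ∫ s : ℝ, Complex.exp (Complex.I * (k : ℂ) * (s : ℂ)) *
            ∫ y : (Submodule.span ℝ {ν})ᗮ, u (s • ν + (y : EuclideanSpace ℝ (Fin n))) := by
  intro k
  set φ : ℝ × (Submodule.span ℝ {ν})ᗮ → EuclideanSpace ℝ (Fin n) :=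
    fun p => p.1 • ν + (p.2 : EuclideanSpace ℝ (Fin n)) with hφ
  have hmp := aux_measurePreserving ν hν
  have hmeas : Measurable φ := by
    apply Measurable.add
    · exact (measurable_fst.smul_const ν)
    · exact continuous_subtype_val.measurable.comp measurable_snd
  have hme : MeasurableEmbedding φ := hmeas.measurableEmbedding (aux_injective ν hν)
  have hin : ∀ p : ℝ × (Submodule.span ℝ {ν})ᗮ, ⟪ν, φ p⟫ = p.1 := by
    intro p
    have hνy : ⟪ν, (p.2 : EuclideanSpace ℝ (Fin n))⟫ = 0 :=
      Submodule.inner_right_of_mem_orthogonal (Submodule.mem_span_singleton_self ν) p.2.2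
    show ⟪ν, p.1 • ν + (p.2 : EuclideanSpace ℝ (Fin n))⟫ = p.1
    rw [inner_add_right, real_inner_smul_right, hνy, add_zero, real_inner_self_eq_norm_sq, hν,
      one_pow, mul_one]
  have step1 : (∫ x, Complex.exp (Complex.I * ((k : ℂ) * (⟪ν, x⟫ : ℝ))) * u x)
      = ∫ p : ℝ × (Submodule.span ℝ {ν})ᗮ,
          Complex.exp (Complex.I * ((k : ℂ) * ((p.1 : ℝ) : ℂ))) * u (φ p) := by
    rw [← hmp.integral_comp hme]
    congr 1
    funext p
    rw [hin p]
  rw [step1]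
  have hint : Integrable (fun p : ℝ × (Submodule.span ℝ {ν})ᗮ =>
      Complex.exp (Complex.I * ((k : ℂ) * ((p.1 : ℝ) : ℂ))) * u (φ p))
      (volume.prod volume) := by
    have huφ : Integrable (u ∘ φ) (volume.prod volume) := (hmp.integrable_comp_emb hme).mpr hu
    apply Integrable.bdd_mul (c := 1) huφ
    · apply Measurable.aestronglyMeasurable
      fun_prop
    · refine Filter.Eventually.of_forall (fun p => ?_)
      rw [mul_comm]
      simp [Complex.norm_exp]
  rw [Measure.volume_eq_prod, integral_prod _ hint]
  congr 1
  funext s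
  rw [← integral_const_mul]
  congr 1
  funext y
  ring_nf
  rfl
end
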